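/- Let n ≥ 2, let α < 0 be real, and let a, b ∈ ℝ with b < a. Then { z ∈ ℂⁿ : ∃ A ∈ U(n), i·a·I + (iα/2)·zz* = A·(i·diag(a, …, a, b))·A* } = { z ∈ ℂⁿ : ‖z‖² = 2(b − a)/α }. In particular this set is nonempty, so for λ = (a,…,a) and μ = (a, …, a, b) the intersection O^G_{(U_λ,α)} ∩ pr⁻¹(O^K_{U_μ}) is nonempty, i.e. n(O^G_{(λ,α)}, O^K_μ) ≠ 0. (Sufficiency in Theorem 4, Case α < 0 with q = 1.) -/

import Mathlib

open Matrix Complex Finset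

/-- The outer matrix `z w*` with `(l,j)` entry `z l * conj (w j)`. -/
noncomputable def outerMat {n : ℕ} (z w : Fin n → ℂ) : Matrix (Fin n) (Fin n) ℂ :=
  Matrix.of fun l j => z l * (starRingEnd ℂ) (w j)

/-- The generic coadjoint orbit `O^G_{(U,α)}` of the Heisenberg motion group,
realized in `M_n(ℂ) × ℂⁿ`. -/
noncomputable def genOrbit {n : ℕ} (U : Matrix (Fin n) (Fin n) ℂ) (α : ℝ) :
    Set (Matrix (Fin n) (Fin n) ℂ × (Fin n → ℂ)) :=
  {p | ∃ k : Matrix.unitaryGroup (Fin n) ℂ, ∃ z : Fin n → ℂ,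
    p = ((k : Matrix (Fin n) (Fin n) ℂ) *
          (U + ((Complex.I * (α : ℂ)) / 2) • outerMat z z) *
          star (k : Matrix (Fin n) (Fin n) ℂ),
        (α : ℂ) • (k : Matrix (Fin n) (Fin n) ℂ).mulVec z)}

/-- `pr⁻¹(O^K_X)` realized in `M_n(ℂ) × ℂⁿ`. -/
noncomputable def prInv {n : ℕ} (X : Matrix (Fin n) (Fin n) ℂ) :
    Set (Matrix (Fin n) (Fin n) ℂ × (Fin n → ℂ)) :=
  {p | ∃ A : Matrix.unitaryGroup (Fin n) ℂ,
    p.1 = (A : Matrix (Fin n) (Fin n) ℂ) * X * star (A : Matrix (Fin n) (Fin n) ℂ)}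

lemma exists_unitary_col {n : ℕ} (i0 : Fin n) (u : EuclideanSpace ℂ (Fin n))
    (hu : ‖u‖ = 1) :
    ∃ A : Matrix.unitaryGroup (Fin n) ℂ, ∀ l, (A : Matrix (Fin n) (Fin n) ℂ) l i0 = u l := by
  have horth : Orthonormal ℂ (Set.restrict {i0} (fun _ : Fin n => u)) := by
    constructor
    · intro i; exact hu
    · intro i j hij
      exact absurd (Subtype.ext (by
        have hi := i.2; have hj := j.2
        simp only [Set.mem_singleton_iff] at hi hj
        rw [hi, hj])) hij
  obtain ⟨b, hb⟩ := horth.exists_orthonormalBasis_extension_of_card_eq (by simp)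
  have hmem : (Matrix.of fun l j => b j l) ∈ Matrix.unitaryGroup (Fin n) ℂ := by
    rw [Matrix.mem_unitaryGroup_iff']
    ext i j
    have := orthonormal_iff_ite.mp b.orthonormal i j
    rw [PiLp.inner_apply] at this
    simpa [Matrix.mul_apply, Matrix.conjTranspose_apply, Matrix.one_apply,
      RCLike.inner_apply, mul_comm] using this
  exact ⟨⟨_, hmem⟩, fun l => by simp [hb i0 rfl]⟩

lemma conj_diag_eq {n : ℕ} (a b : ℝ) (A : Matrix.unitaryGroup (Fin n) ℂ)
    (u : Fin n → ℂ) (i0 : Fin n) (hi0 : (i0 : ℕ) = n - 1)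
    (hcol : ∀ l, (A : Matrix (Fin n) (Fin n) ℂ) l i0 = u l) :
    (A : Matrix (Fin n) (Fin n) ℂ) *
        (Complex.I • Matrix.diagonal fun i : Fin n =>
          if (i : ℕ) = n - 1 then (b : ℂ) else (a : ℂ)) *
        star (A : Matrix (Fin n) (Fin n) ℂ)
      = (Complex.I * (a : ℂ)) • (1 : Matrix (Fin n) (Fin n) ℂ)
          + (Complex.I * ((b:ℂ) - a)) • outerMat u u := by
  have hAA : (A : Matrix (Fin n) (Fin n) ℂ) * star (A : Matrix (Fin n) (Fin n) ℂ) = 1 :=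
    Matrix.mem_unitaryGroup_iff.mp A.2
  have hD : (Complex.I • Matrix.diagonal fun i : Fin n =>
        if (i : ℕ) = n - 1 then (b : ℂ) else (a : ℂ))
      = Matrix.diagonal (fun i : Fin n =>
          Complex.I * (if (i : ℕ) = n - 1 then (b : ℂ) else (a : ℂ))) := by
    ext i j
    by_cases h : i = j <;> simp [Matrix.diagonal_apply, h]
  rw [hD]
  ext l j
  have hone : ∑ k, (A : Matrix (Fin n) (Fin n) ℂ) l k *
      (starRingEnd ℂ) ((A : Matrix (Fin n) (Fin n) ℂ) j k)
      = (1 : Matrix (Fin n) (Fin n) ℂ) l j := by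
    rw [← hAA]
    simp [Matrix.mul_apply, Matrix.conjTranspose_apply]
  have step : ∀ k : Fin n, (A : Matrix (Fin n) (Fin n) ℂ) l k *
        (Complex.I * (if (k : ℕ) = n - 1 then (b : ℂ) else (a : ℂ))) *
        (starRingEnd ℂ) ((A : Matrix (Fin n) (Fin n) ℂ) j k)
      = Complex.I * a * ((A : Matrix (Fin n) (Fin n) ℂ) l k *
          (starRingEnd ℂ) ((A : Matrix (Fin n) (Fin n) ℂ) j k))
        + (if k = i0 then Complex.I * ((b:ℂ) - a) * ((A : Matrix (Fin n) (Fin n) ℂ) l k *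
          (starRingEnd ℂ) ((A : Matrix (Fin n) (Fin n) ℂ) j k)) else 0) := by
    intro k
    by_cases h : k = i0
    · simp only [h, hi0, if_pos rfl, if_true]
      ring
    · have h' : ¬((k:ℕ) = n - 1) := fun hc => h (Fin.ext (by rw [hc, hi0]))
      simp only [if_neg h, if_neg h']
      ring
  have lhs_eq : ((A : Matrix (Fin n) (Fin n) ℂ) *
        Matrix.diagonal (fun i : Fin n =>
          Complex.I * (if (i : ℕ) = n - 1 then (b : ℂ) else (a : ℂ))) *
        star (A : Matrix (Fin n) (Fin n) ℂ)) l j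
      = ∑ k, (A : Matrix (Fin n) (Fin n) ℂ) l k *
          (Complex.I * (if (k : ℕ) = n - 1 then (b : ℂ) else (a : ℂ))) *
          (starRingEnd ℂ) ((A : Matrix (Fin n) (Fin n) ℂ) j k) := by
    rw [Matrix.star_eq_conjTranspose]
    conv_lhs => rw [Matrix.mul_apply]
    simp only [Matrix.mul_diagonal, Matrix.conjTranspose_apply, Complex.star_def]
  rw [lhs_eq, Finset.sum_congr rfl fun k _ => step k, Finset.sum_add_distrib, ← Finset.mul_sum,
    Finset.sum_ite_eq', hone]
  simp only [Finset.mem_univ, if_true, hcol, outerMat, Matrix.add_apply, Matrix.smul_apply,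
    Matrix.of_apply, smul_eq_mul]

lemma diag_sum_eq {n : ℕ} (hn : 2 ≤ n) (a b : ℝ) :
    ∑ i : Fin n, (if (i : ℕ) = n - 1 then (b:ℂ) else (a:ℂ))
      = n * (a:ℂ) + ((b:ℂ) - a) := by
  calc ∑ i : Fin n, (if (i : ℕ) = n - 1 then (b:ℂ) else (a:ℂ))
      = ∑ i : Fin n, ((a:ℂ) + if i = (⟨n-1, by omega⟩ : Fin n) then ((b:ℂ) - a) else 0) := by
        refine Finset.sum_congr rfl fun i _ => ?_
        have : ((i:ℕ) = n - 1) ↔ (i = (⟨n-1, by omega⟩ : Fin n)) := by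
          simp [Fin.ext_iff]
        rw [if_congr this rfl rfl]
        split <;> ring
    _ = n * (a:ℂ) + ((b:ℂ) - a) := by
        rw [Finset.sum_add_distrib, Finset.sum_const, Finset.sum_ite_eq']
        simp [mul_comm]

/-- sufficiency in Theorem 4, case `α < 0`, `q = 1`: for `b < a`,
`F_μ = {z : ‖z‖² = 2(b−a)/α}` where `μ = (a,…,a,b)`; in particular it is
nonempty, hence `O^G_{(U_λ,α)} ∩ pr⁻¹(O^K_{U_μ})` is nonempty for `λ = (a,…,a)`,
i.e. `n(O^G_{(λ,α)}, O^K_μ) ≠ 0`. -/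
theorem Fmu_nonempty_neg {n : ℕ} (hn : 2 ≤ n) (α : ℝ) (hα : α < 0)
    (a b : ℝ) (hab : b < a) :
    {z : Fin n → ℂ | ∃ A : Matrix.unitaryGroup (Fin n) ℂ,
        (Complex.I * (a : ℂ)) • (1 : Matrix (Fin n) (Fin n) ℂ)
            + ((Complex.I * (α : ℂ)) / 2) • outerMat z z
          = (A : Matrix (Fin n) (Fin n) ℂ) *
              (Complex.I • Matrix.diagonal fun i : Fin n =>
                if (i : ℕ) = n - 1 then (b : ℂ) else (a : ℂ)) *
              star (A : Matrix (Fin n) (Fin n) ℂ)}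
      = {z : Fin n → ℂ | ∑ j, Complex.normSq (z j) = 2 * (b - a) / α}
    ∧ (genOrbit ((Complex.I * (a : ℂ)) • (1 : Matrix (Fin n) (Fin n) ℂ)) α ∩
        prInv (Complex.I • Matrix.diagonal fun i : Fin n =>
          if (i : ℕ) = n - 1 then (b : ℂ) else (a : ℂ))).Nonempty := by
  haveI : NeZero n := ⟨by omega⟩
  have hαne : α ≠ 0 := ne_of_lt hα
  have hc0 : 0 < 2 * (b - a) / α := div_pos_of_neg_of_neg (by linarith) hα
  have hseteq : {z : Fin n → ℂ | ∃ A : Matrix.unitaryGroup (Fin n) ℂ,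
        (Complex.I * (a : ℂ)) • (1 : Matrix (Fin n) (Fin n) ℂ)
            + ((Complex.I * (α : ℂ)) / 2) • outerMat z z
          = (A : Matrix (Fin n) (Fin n) ℂ) *
              (Complex.I • Matrix.diagonal fun i : Fin n =>
                if (i : ℕ) = n - 1 then (b : ℂ) else (a : ℂ)) *
              star (A : Matrix (Fin n) (Fin n) ℂ)}
      = {z : Fin n → ℂ | ∑ j, Complex.normSq (z j) = 2 * (b - a) / α} := by
    ext z
    simp only [Set.mem_setOf_eq]
    constructor
    · rintro ⟨A, hA⟩
      have hA2 : star (A : Matrix (Fin n) (Fin n) ℂ) * (A : Matrix (Fin n) (Fin n) ℂ) = 1 :=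
        Matrix.mem_unitaryGroup_iff'.mp A.2
      have htr := congrArg Matrix.trace hA
      rw [Matrix.trace_mul_cycle, hA2, Matrix.one_mul] at htr
      have htro : Matrix.trace (outerMat z z)
          = ((∑ j, Complex.normSq (z j) : ℝ) : ℂ) := by
        simp [Matrix.trace, Matrix.diag, outerMat, Complex.mul_conj]
      rw [Matrix.trace_add, Matrix.trace_smul, Matrix.trace_smul, Matrix.trace_one, htro,
        Matrix.trace_smul, Matrix.trace_diagonal, diag_sum_eq hn a b] at htr
      simp only [smul_eq_mul, Fintype.card_fin] at htr
      set S : ℝ := ∑ j, Complex.normSq (z j) with hS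
      have h2 : (Complex.I * (α:ℂ) / 2) * (S:ℂ) = Complex.I * ((b:ℂ) - a) := by
        linear_combination htr
      have h3 : (S:ℂ) * (α:ℂ) = 2 * ((b:ℂ) - a) := by
        linear_combination (-2*Complex.I) * h2
          + ((α:ℂ) * S - 2*((b:ℂ) - a)) * Complex.I_mul_I
      have hre : S * α = 2 * (b - a) := by exact_mod_cast h3
      rw [eq_div_iff hαne]
      exact hre
    · intro hz
      set r := Real.sqrt (2 * (b - a) / α) with hrdef
      have hr2 : r ^ 2 = 2 * (b - a) / α := Real.sq_sqrt hc0.le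
      have hrpos : 0 < r := Real.sqrt_pos.mpr hc0
      have hrne : (r:ℂ) ≠ 0 := by exact_mod_cast hrpos.ne'
      set u : EuclideanSpace ℂ (Fin n) := WithLp.toLp 2 (fun l => (r:ℂ)⁻¹ * z l) with hudef
      have hzu : ∀ l, z l = (r:ℂ) * u l := fun l => by
        rw [hudef, PiLp.toLp_apply]; field_simp
      have husum : ∑ j, Complex.normSq (u j) = 1 := by
        have heach : ∀ j, Complex.normSq (u j) = (r^2)⁻¹ * Complex.normSq (z j) := by
          intro j
          rw [hudef, PiLp.toLp_apply]
          simp only [Complex.normSq_mul, ← Complex.ofReal_inv, Complex.normSq_ofReal]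
          ring
        rw [Finset.sum_congr rfl fun j _ => heach j, ← Finset.mul_sum, hz, hr2]
        have hne : 2 * (b - a) ≠ 0 := by nlinarith
        field_simp
        exact div_self (sub_ne_zero.mpr hab.ne)
      have hnorm : ‖u‖ = 1 := by
        rw [EuclideanSpace.norm_eq]
        have hsum' : ∑ i, ‖u i‖ ^ 2 = 1 := by
          rw [← husum]
          exact Finset.sum_congr rfl fun j _ => by
            rw [Complex.sq_norm]
        rw [hsum', Real.sqrt_one]
      obtain ⟨A, hcol⟩ := exists_unitary_col ⟨n - 1, by omega⟩ u hnorm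
      refine ⟨A, ?_⟩
      rw [conj_diag_eq a b A u ⟨n - 1, by omega⟩ rfl hcol]
      congr 1
      ext l j
      simp only [Matrix.smul_apply, outerMat, Matrix.of_apply, smul_eq_mul]
      rw [hzu l, hzu j, _root_.map_mul, Complex.conj_ofReal]
      have hr2c : ((α:ℂ)/2) * (r:ℂ)^2 = (b:ℂ) - a := by
        have : (α/2) * r^2 = b - a := by rw [hr2]; field_simp
        exact_mod_cast this
      linear_combination (Complex.I * u l * (starRingEnd ℂ) (u j)) * hr2c
  refine ⟨hseteq, ?_⟩
  set z₀ : Fin n → ℂ := fun i => if i = 0 then ((Real.sqrt (2 * (b - a) / α)) : ℂ) else 0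
    with hz₀def
  have hz₀sum : ∑ j, Complex.normSq (z₀ j) = 2 * (b - a) / α := by
    have heach : ∀ j : Fin n, Complex.normSq (z₀ j)
        = if j = (0 : Fin n) then 2 * (b - a) / α else 0 := by
      intro j
      by_cases h : j = 0 <;>
        simp [hz₀def, h, Complex.normSq_ofReal, Real.mul_self_sqrt hc0.le]
    rw [Finset.sum_congr rfl fun j _ => heach j, Finset.sum_ite_eq']
    simp
  have hmem : z₀ ∈ {z : Fin n → ℂ | ∃ A : Matrix.unitaryGroup (Fin n) ℂ,
        (Complex.I * (a : ℂ)) • (1 : Matrix (Fin n) (Fin n) ℂ)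
            + ((Complex.I * (α : ℂ)) / 2) • outerMat z z
          = (A : Matrix (Fin n) (Fin n) ℂ) *
              (Complex.I • Matrix.diagonal fun i : Fin n =>
                if (i : ℕ) = n - 1 then (b : ℂ) else (a : ℂ)) *
              star (A : Matrix (Fin n) (Fin n) ℂ)} := by
    rw [hseteq]
    exact hz₀sum
  obtain ⟨A, hA⟩ := hmem
  refine ⟨((Complex.I * (a : ℂ)) • (1 : Matrix (Fin n) (Fin n) ℂ)
      + ((Complex.I * (α : ℂ)) / 2) • outerMat z₀ z₀, (α : ℂ) • z₀), ⟨1, z₀, ?_⟩, ⟨A, hA⟩⟩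
  simp
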